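/- Zero reward-difference-prediction loss characterizes the optimum: let Ω be a measurable space, Q a probability measure on Ω, r : Ω → ℝ a bounded measurable function, β > 0, Z = ∫ exp(r(x)/β) dQ(x), and Q* = Q.withDensity (fun x => exp(r(x)/β) / Z). Let P be a probability measure on Ω of the form P = Q.withDensity p for a measurable function p : Ω → ℝ with p(x) > 0 for Q-almost every x, and suppose the function (x, y) ↦ (log p(x) − log p(y) − (r(x) − r(y))/β)² is integrable with respect to Q ⊗ Q. Define the loss L(P) = ∫ (log p(x) − log p(y) − (r(x) − r(y))/β)² d(Q ⊗ Q)(x, y). Then P = Q* if and only if L(P) = 0. -/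
import Mathlib


open MeasureTheory Real ENNReal
open scoped Classical

/-- The Kullback–Leibler divergence between two measures, valued in the extended
nonnegative reals. It is finite exactly when `μ ≪ ν` and the log-likelihood ratio
`llr μ ν` is `μ`-integrable, in which case it equals `∫ x, llr μ ν x ∂μ`. -/

noncomputable def klDiv {Ω : Type*} [MeasurableSpace Ω] (μ ν : Measure Ω) : ℝ≥0∞ :=
  if μ ≪ ν ∧ Integrable (llr μ ν) μ then ENNReal.ofReal (∫ x, llr μ ν x ∂μ) else ⊤


/-- Zero reward-difference-prediction loss characterizes the optimum: a probability
measure `P = Q.withDensity p` with `Q`-a.e. positive density `p` equals the tilted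
optimal measure `Q*` if and only if the RDP loss, the mean squared error over
`(Q ⊗ Q)` between the predicted reward difference `log (p x) - log (p y)` and the
true scaled reward difference `(r x - r y) / β`, vanishes. -/
theorem eq_tilted_iff_rdp_loss_eq_zero
    {Ω : Type*} [MeasurableSpace Ω] (Q : Measure Ω) [IsProbabilityMeasure Q]
    (r : Ω → ℝ) (hr : Measurable r) (hr_bdd : ∃ C : ℝ, ∀ x, |r x| ≤ C)
    (β : ℝ) (hβ : 0 < β)
    (Z : ℝ) (hZ : Z = ∫ x, exp (r x / β) ∂Q)
    (Qstar : Measure Ω)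
    (hQstar : Qstar = Q.withDensity (fun x => ENNReal.ofReal (exp (r x / β) / Z)))
    (p : Ω → ℝ) (hp : Measurable p) (hp_pos : ∀ᵐ x ∂Q, 0 < p x)
    (P : Measure Ω) (hP : P = Q.withDensity (fun x => ENNReal.ofReal (p x)))
    [IsProbabilityMeasure P]
    (hint : Integrable
      (fun xy : Ω × Ω =>
        (Real.log (p xy.1) - Real.log (p xy.2) - (r xy.1 - r xy.2) / β) ^ 2)
      (Q.prod Q)) :
    P = Qstar ↔
      ∫ xy : Ω × Ω,
          (Real.log (p xy.1) - Real.log (p xy.2) - (r xy.1 - r xy.2) / β) ^ 2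
          ∂(Q.prod Q) = 0 := by
  obtain ⟨C, hC⟩ := hr_bdd
  -- integrability of exp (r x / β)
  have hmeas_e : Measurable fun x => exp (r x / β) := (hr.div_const β).exp
  have hint_e : Integrable (fun x => exp (r x / β)) Q := by
    refine ⟨hmeas_e.aestronglyMeasurable, ?_⟩
    apply HasFiniteIntegral.of_bounded (C := exp (C / β))
    filter_upwards with x
    rw [Real.norm_eq_abs, abs_of_pos (exp_pos _)]
    exact exp_le_exp.mpr (by gcongr; exact (abs_le.mp (hC x)).2)
  have hZpos : 0 < Z := by
    rw [hZ]
    have h1 : (0:ℝ) < ∫ _ : Ω, exp (-C / β) ∂Q := by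
      simp [exp_pos]
    refine lt_of_lt_of_le h1 (integral_mono (integrable_const _) hint_e fun x => ?_)
    exact exp_le_exp.mpr (by gcongr; exact (abs_le.mp (hC x)).1)
  -- lintegral of density p equals 1
  have hlint_p : ∫⁻ x, ENNReal.ofReal (p x) ∂Q = 1 := by
    have : P Set.univ = 1 := measure_univ
    rwa [hP, withDensity_apply _ MeasurableSet.univ, setLIntegral_univ] at this
  have hlintZ : ∫⁻ x, ENNReal.ofReal (exp (r x / β)) ∂Q = ENNReal.ofReal Z := by
    rw [hZ, ofReal_integral_eq_lintegral_ofReal hint_e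
      (Filter.Eventually.of_forall fun x => (exp_pos _).le)]
  constructor
  · intro hPQ
    -- from P = Qstar deduce p = exp(r/β)/Z a.e.
    have hae : (fun x => ENNReal.ofReal (p x)) =ᵐ[Q]
        (fun x => ENNReal.ofReal (exp (r x / β) / Z)) := by
      rw [← withDensity_eq_iff (hp.ennreal_ofReal.aemeasurable)
        ((hmeas_e.div_const Z).ennreal_ofReal.aemeasurable)
        (by rw [hlint_p]; exact one_ne_top)]
      rw [← hP, ← hQstar]; exact hPQ
    have hpe : ∀ᵐ x ∂Q, p x = exp (r x / β) / Z := by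
      filter_upwards [hae, hp_pos] with x hx hxp
      exact (ENNReal.ofReal_eq_ofReal_iff hxp.le
        (div_nonneg (exp_pos _).le hZpos.le)).mp hx
    have h1 : ∀ᵐ xy ∂(Q.prod Q), p xy.1 = exp (r xy.1 / β) / Z :=
      Measure.quasiMeasurePreserving_fst.tendsto_ae.eventually hpe
    have h2 : ∀ᵐ xy ∂(Q.prod Q), p xy.2 = exp (r xy.2 / β) / Z :=
      Measure.quasiMeasurePreserving_snd.tendsto_ae.eventually hpe
    have hz : (fun xy : Ω × Ω =>
        (Real.log (p xy.1) - Real.log (p xy.2) - (r xy.1 - r xy.2) / β) ^ 2)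
        =ᵐ[Q.prod Q] (fun _ => (0:ℝ)) := by
      filter_upwards [h1, h2] with xy hx hy
      rw [hx, hy, Real.log_div (exp_ne_zero _) (ne_of_gt hZpos),
        Real.log_div (exp_ne_zero _) (ne_of_gt hZpos), Real.log_exp, Real.log_exp,
        sub_div]
      ring
    rw [integral_congr_ae hz, integral_zero]
  · intro hL
    -- integrand vanishes a.e.
    have hz : ∀ᵐ xy ∂(Q.prod Q),
        (Real.log (p xy.1) - Real.log (p xy.2) - (r xy.1 - r xy.2) / β) ^ 2 = 0 := by
      have := (integral_eq_zero_iff_of_nonneg_ae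
        (Filter.Eventually.of_forall fun xy => sq_nonneg _) hint).mp hL
      filter_upwards [this] with xy hxy using hxy
    have hz' : ∀ᵐ xy ∂(Q.prod Q),
        Real.log (p xy.1) - r xy.1 / β = Real.log (p xy.2) - r xy.2 / β := by
      filter_upwards [hz] with xy hxy
      have := pow_eq_zero_iff (n := 2) (by norm_num) |>.mp hxy
      rw [sub_div] at this
      linarith [sub_eq_zero.mp this]
    -- deduce log p x - r x / β is a.e. constant
    have hae2 : ∀ᵐ x ∂Q, ∀ᵐ y ∂Q,
        Real.log (p x) - r x / β = Real.log (p y) - r y / β :=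
      Measure.ae_ae_of_ae_prod hz'
    obtain ⟨x₀, hx₀⟩ := hae2.exists
    set c : ℝ := Real.log (p x₀) - r x₀ / β with hc
    have hpy : ∀ᵐ y ∂Q, p y = exp c * exp (r y / β) := by
      filter_upwards [hx₀, hp_pos] with y hy hyp
      have : Real.log (p y) = c + r y / β := by linarith [hy]
      rw [← Real.exp_log hyp, this, Real.exp_add]
    -- normalization: exp c * Z = 1
    have hnorm : exp c * Z = 1 := by
      have h1 : ∫⁻ x, ENNReal.ofReal (p x) ∂Q
          = ENNReal.ofReal (exp c) * ENNReal.ofReal Z := by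
        rw [lintegral_congr_ae (hpy.mono fun y hy => by rw [hy])]
        simp_rw [ENNReal.ofReal_mul (exp_pos c).le]
        rw [lintegral_const_mul _ hmeas_e.ennreal_ofReal, hlintZ]
      rw [hlint_p, ← ENNReal.ofReal_mul (exp_pos c).le] at h1
      have := ENNReal.ofReal_eq_one.mp h1.symm
      linarith
    have hexpc : exp c = 1 / Z := by
      field_simp at hnorm ⊢; linarith
    have hpe : ∀ᵐ x ∂Q, p x = exp (r x / β) / Z := by
      filter_upwards [hpy] with x hx
      rw [hx, hexpc]; ring
    rw [hP, hQstar]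
    exact withDensity_congr_ae (hpe.mono fun x hx => by dsimp only; rw [hx])
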